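/- A non-trivial identity u ≈ v holds in the monoid variety D₁ = var{x² ≈ x³, x²y ≈ xyx ≈ yx²} (equivalently in the monoid S(xy)) if and only if: (1) sim(u) = sim(v) and mul(u) = mul(v), and (2) deleting all multiple letters from u and v yields the same word (the simple letters occur in the same order in u and v). -/

import Mathlib

inductive T3 | e | s | z deriving DecidableEq
instance : Fintype T3 := ⟨{T3.e, T3.s, T3.z}, fun x => by cases x <;> decide⟩
namespace T3
def mul : T3 → T3 → T3
  | e, b => b
  | a, e => a
  | _, _ => z
instance : Monoid T3 where
  mul := mul
  one := e
  one_mul := by decide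
  mul_one := by decide
  mul_assoc := by decide

end T3

inductive T5 | e | a | b | ab | z deriving DecidableEq
instance : Fintype T5 := ⟨{T5.e, T5.a, T5.b, T5.ab, T5.z}, fun x => by cases x <;> decide⟩
namespace T5
def mul : T5 → T5 → T5
  | e, w => w
  | w, e => w
  | a, b => ab
  | _, _ => z
instance : Monoid T5 where
  mul := mul
  one := e
  one_mul := by decide
  mul_one := by decide
  mul_assoc := by decide

end T5

theorem prod_map_filter {X M : Type} [Monoid M] (f : X → M) (p : X → Bool)
    (hf : ∀ c, p c = false → f c = 1) :
    ∀ w : List X, (w.map f).prod = ((w.filter p).map f).prod := by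
  intro w
  induction w with
  | nil => rfl
  | cons a t ih =>
    by_cases h : p a
    · simp [List.filter_cons, h, ih]
    · have := hf a (by simpa using h)
      simp [List.filter_cons, h, ih, this]

theorem two_elt_list {X : Type} [DecidableEq X] (a b : X) (hab : a ≠ b) :
    ∀ l : List X, l.count a = 1 → l.count b = 1 →
    (∀ c ∈ l, c = a ∨ c = b) → l = [a, b] ∨ l = [b, a] := by
  have len : ∀ l : List X, (∀ c ∈ l, c = a ∨ c = b) → l.length = l.count a + l.count b := by
    intro l
    induction l with
    | nil => simp
    | cons c t ih =>
      intro h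
      have ht := ih (fun c hc => h c (by simp [hc]))
      rcases h c (by simp) with rfl | rfl
      · rw [List.count_cons_self, List.count_cons_of_ne (by exact fun h' => hab h')]
        simp [ht]; omega
      · rw [List.count_cons_self, List.count_cons_of_ne hab.symm]
        simp [ht]; omega
  intro l ha hb hmem
  have hlen : l.length = 2 := by rw [len l hmem]; omega
  match l, hlen with
  | [c, d], _ =>
    rcases hmem c (by simp) with rfl | rfl
    · rcases hmem d (by simp) with rfl | rfl
      · simp at ha
      · left; rfl
    · rcases hmem d (by simp) with rfl | rfl
      · right; rfl
      · simp at hb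
namespace T3
def g : ℕ → T3 := fun n => if n = 0 then 1 else if n = 1 then s else z

theorem s_mul_g (n : ℕ) : s * g n = g (n + 1) := by
  match n with
  | 0 => rfl
  | 1 => rfl
  | (m+2) => simp only [g]; norm_num; rfl

end T3

theorem prod_count {X : Type} [DecidableEq X] (x : X) :
    ∀ w : List X, (w.map (fun c => if c = x then T3.s else 1)).prod = T3.g (w.count x) := by
  intro w
  induction w with
  | nil => rfl
  | cons a t ih =>
    by_cases h : a = x
    · subst h
      simp only [List.map_cons, List.prod_cons, if_pos rfl, List.count_cons_self, ih]
      exact T3.s_mul_g _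
    · rw [List.count_cons_of_ne h]
      simp only [List.map_cons, List.prod_cons, if_neg h, ih, one_mul]

theorem g_inj {m n : ℕ} (h : T3.g m = T3.g n) : (m = 1 ↔ n = 1) ∧ (2 ≤ m ↔ 2 ≤ n) := by
  unfold T3.g at h
  split_ifs at h with h1 h2 h3 h4 h5 h6 h7 <;> simp_all <;> omega

variable {X M : Type} [DecidableEq X] [Monoid M]

theorem sq_central (h2 : ∀ x y : M, x ^ 2 * y = x * y * x)
    (h3 : ∀ x y : M, x * y * x = y * x ^ 2) (x z : M) : x ^ 2 * z = z * x ^ 2 :=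
  (h2 x z).trans (h3 x z)

theorem sq_absorb (h1 : ∀ x : M, x ^ 2 = x ^ 3) (x : M) : x ^ 2 * x = x ^ 2 := by
  rw [← pow_succ, ← h1]

theorem L0 (h1 : ∀ x : M, x ^ 2 = x ^ 3) (h2 : ∀ x y : M, x ^ 2 * y = x * y * x)
    (h3 : ∀ x y : M, x * y * x = y * x ^ 2) (f : X → M) (x : X) : ∀ w : List X,
    f x ^ 2 * (w.map f).prod = f x ^ 2 * ((w.filter (fun a => !(a == x))).map f).prod := by
  intro w
  induction w with
  | nil => rfl
  | cons a t ih =>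
    by_cases h : a = x
    · subst h
      rw [List.filter_cons_of_neg (by simp), List.map_cons, List.prod_cons,
        ← mul_assoc, sq_absorb h1, ih]
    · rw [List.filter_cons_of_pos (by simp [h]), List.map_cons, List.map_cons,
        List.prod_cons, List.prod_cons]
      simp only [← mul_assoc]
      rw [sq_central h2 h3]
      simp only [mul_assoc]
      rw [ih]

theorem L2 (h1 : ∀ x : M, x ^ 2 = x ^ 3) (h2 : ∀ x y : M, x ^ 2 * y = x * y * x)
    (h3 : ∀ x y : M, x * y * x = y * x ^ 2) (f : X → M) (x : X) (t : List X) (ht : x ∈ t) :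
    f x * (t.map f).prod = f x ^ 2 * ((t.filter (fun a => !(a == x))).map f).prod := by
  obtain ⟨p, s, rfl⟩ := List.append_of_mem ht
  rw [List.map_append, List.prod_append, List.map_cons, List.prod_cons]
  have key : f x * ((p.map f).prod * (f x * (s.map f).prod))
      = f x ^ 2 * ((p.map f).prod * (s.map f).prod) := by
    rw [← mul_assoc, ← mul_assoc, ← h2, mul_assoc]
  rw [key, ← List.prod_append, ← List.map_append, L0 h1 h2 h3 f x (p ++ s),
    List.filter_append, List.filter_append, List.filter_cons_of_neg (by simp)]

theorem L3 (h1 : ∀ x : M, x ^ 2 = x ^ 3) (h2 : ∀ x y : M, x ^ 2 * y = x * y * x)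
    (h3 : ∀ x y : M, x * y * x = y * x ^ 2) (f : X → M) (x : X) : ∀ w : List X, 2 ≤ w.count x →
    (w.map f).prod = f x ^ 2 * ((w.filter (fun a => !(a == x))).map f).prod := by
  intro w
  induction w with
  | nil => simp
  | cons a t ih =>
    intro hc
    by_cases h : a = x
    · subst h
      have hm : a ∈ t := by
        rw [List.count_cons_self] at hc
        exact List.count_pos_iff.mp (by omega)
      rw [List.filter_cons_of_neg (by simp), List.map_cons, List.prod_cons, L2 h1 h2 h3 f a t hm]
    · rw [List.count_cons_of_ne h] at hc
      rw [List.filter_cons_of_pos (by simp [h]), List.map_cons, List.map_cons,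
        List.prod_cons, List.prod_cons, ih hc]
      simp only [← mul_assoc]
      rw [← sq_central h2 h3]

variable {X M : Type} [DecidableEq X] [Monoid M]


theorem perm_of_nodup_mem {l₁ l₂ : List X} (n₁ : l₁.Nodup) (n₂ : l₂.Nodup)
    (hm : ∀ a, a ∈ l₁ ↔ a ∈ l₂) : l₁.Perm l₂ := by
  rw [List.perm_iff_count]
  intro a
  by_cases h : a ∈ l₁
  · rw [List.count_eq_one_of_mem n₁ h, List.count_eq_one_of_mem n₂ ((hm a).mp h)]
  · rw [List.count_eq_zero_of_not_mem h, List.count_eq_zero_of_not_mem (fun hh => h ((hm a).mpr hh))]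

theorem prod_sq_eq (h2 : ∀ x y : M, x ^ 2 * y = x * y * x)
    (h3 : ∀ x y : M, x * y * x = y * x ^ 2) (f : X → M) {l₁ l₂ : List X}
    (n₁ : l₁.Nodup) (n₂ : l₂.Nodup) (hm : ∀ a, a ∈ l₁ ↔ a ∈ l₂) :
    (l₁.map (fun a => f a ^ 2)).prod = (l₂.map (fun a => f a ^ 2)).prod := by
  refine List.Perm.prod_eq' ((perm_of_nodup_mem n₁ n₂ hm).map _) ?_
  rw [List.pairwise_map]
  refine List.pairwise_of_forall (fun a b => ?_) -- maybe wrong name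
  exact ((h2 (f a) (f b ^ 2)).trans (h3 (f a) (f b ^ 2)))

variable {X M : Type} [DecidableEq X] [Monoid M]

theorem normal_form (h1 : ∀ x : M, x ^ 2 = x ^ 3) (h2 : ∀ x y : M, x ^ 2 * y = x * y * x)
    (h3 : ∀ x y : M, x * y * x = y * x ^ 2) (f : X → M) :
    ∀ (n : ℕ) (w : List X), w.length ≤ n →
    (w.map f).prod =
      ((w.dedup.filter (fun a => decide (2 ≤ w.count a))).map (fun a => f a ^ 2)).prod *
        ((w.filter (fun a => decide (w.count a = 1))).map f).prod := by
  intro n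
  induction n with
  | zero =>
    intro w hw
    have : w = [] := List.length_eq_zero_iff.mp (Nat.le_zero.mp hw)
    subst this; simp
  | succ n IH =>
    intro w hw
    rcases hml : w.dedup.filter (fun a => decide (2 ≤ w.count a)) with _ | ⟨x, rest⟩
    · -- no multiple letters
      have hall : ∀ a ∈ w, w.count a = 1 := by
        intro a ha
        have h1' : 1 ≤ w.count a := List.count_pos_iff.mpr ha
        have h2' : ¬ (2 ≤ w.count a) := by
          have := List.filter_eq_nil_iff.mp hml a (List.mem_dedup.mpr ha)
          simpa using this
        omega
      rw [List.filter_eq_self.mpr (fun a ha => by simpa using hall a ha)]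
      simp
    · -- x is a multiple letter
      have hx2 : 2 ≤ w.count x := by
        have : x ∈ w.dedup.filter (fun a => decide (2 ≤ w.count a)) := by rw [hml]; simp
        simpa using (List.mem_filter.mp this).2
      set w' := w.filter (fun a => !(a == x)) with hw'
      have hcnt : ∀ a : X, a ≠ x → w'.count a = w.count a := by
        intro a ha
        exact List.count_filter (by simpa using ha)
      have hxw' : x ∉ w' := by simp [hw', List.mem_filter]
      have hlen : w'.length ≤ n := by
        have hsplit := List.length_eq_length_filter_add (l := w) (· == x)
        have hcx : (w.filter (· == x)).length = w.count x := by
          rw [List.count_eq_countP, List.countP_eq_length_filter]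
        have hpe : w.filter (!(· == x) ·) = w' := rfl
        rw [hpe] at hsplit
        omega
      have hprod : (w.map f).prod = f x ^ 2 * (w'.map f).prod := L3 h1 h2 h3 f x w hx2
      have ihw := IH w' hlen
      have hA : w'.filter (fun a => decide (w'.count a = 1))
          = w.filter (fun a => decide (w.count a = 1)) := by
        have s1 : w'.filter (fun a => decide (w'.count a = 1))
            = w'.filter (fun a => decide (w.count a = 1)) :=
          List.filter_congr (fun a ha => by
            have hax : a ≠ x := fun h => hxw' (h ▸ ha)
            rw [hcnt a hax])
        have s2 : w'.filter (fun a => decide (w.count a = 1))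
            = w.filter (fun a => decide (w.count a = 1) && !(a == x)) := by
          rw [hw', List.filter_filter]
        have s3 : w.filter (fun a => decide (w.count a = 1) && !(a == x))
            = w.filter (fun a => decide (w.count a = 1)) :=
          List.filter_congr (fun a _ => by
            by_cases hc : w.count a = 1
            · have hax : a ≠ x := fun h => by rw [← h] at hx2; omega
              · simp [hc, hax]
            · simp [hc])
        rw [s1, s2, s3]
      have hnd : (x :: rest).Nodup := hml ▸ (List.Nodup.filter _ w.nodup_dedup)
      have hxr : x ∉ rest := (List.nodup_cons.mp hnd).1
      have hndr : rest.Nodup := (List.nodup_cons.mp hnd).2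
      have hmemr : ∀ a, a ∈ rest ↔ (a ≠ x ∧ 2 ≤ w.count a) := by
        intro a
        constructor
        · intro ha
          refine ⟨fun h => hxr (h ▸ ha), ?_⟩
          have hmem : a ∈ x :: rest := List.mem_cons_of_mem _ ha
          rw [← hml] at hmem
          simpa using (List.mem_filter.mp hmem).2
        · rintro ⟨hax, ha2⟩
          have haw : a ∈ w := List.count_pos_iff.mp (by omega)
          have hmem : a ∈ x :: rest := by
            rw [← hml]
            exact List.mem_filter.mpr ⟨List.mem_dedup.mpr haw, by simpa using ha2⟩
          rcases List.mem_cons.mp hmem with h | h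
          · exact absurd h hax
          · exact h
      have hndml' : (w'.dedup.filter (fun a => decide (2 ≤ w'.count a))).Nodup :=
        List.Nodup.filter _ w'.nodup_dedup
      have hmemml' : ∀ a, a ∈ w'.dedup.filter (fun a => decide (2 ≤ w'.count a)) ↔ a ∈ rest := by
        intro a
        rw [List.mem_filter, List.mem_dedup, hmemr]
        constructor
        · rintro ⟨haw', h2'⟩
          have hax : a ≠ x := fun h => hxw' (h ▸ haw')
          refine ⟨hax, ?_⟩
          rw [← hcnt a hax]
          simpa using h2'
        · rintro ⟨hax, ha2⟩
          have hc : 2 ≤ w'.count a := by rw [hcnt a hax]; exact ha2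
          exact ⟨List.count_pos_iff.mp (by omega), by simpa using hc⟩
      have hB := prod_sq_eq h2 h3 f hndml' hndr hmemml'
      rw [hprod, ihw, hA, hB, List.map_cons, List.prod_cons, mul_assoc]

variable {X : Type} [DecidableEq X]

theorem filter_single (a c : X) : ∀ t : List X, t.Nodup → a ∉ t → c ∈ t →
    t.filter (fun d => d == a || d == c) = [c] := by
  intro t
  induction t with
  | nil => simp
  | cons d r ih =>
    intro hnd hat hct
    have hda : d ≠ a := fun h => hat (h ▸ List.mem_cons_self (a := d) (l := r))
    have har : a ∉ r := fun h => hat (List.mem_cons_of_mem _ h)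
    have hdr : d ∉ r := (List.nodup_cons.mp hnd).1
    have hndr : r.Nodup := (List.nodup_cons.mp hnd).2
    by_cases hdc : d = c
    · subst hdc
      rw [List.filter_cons_of_pos (by simp)]
      have : r.filter (fun e => e == a || e == d) = [] := by
        rw [List.filter_eq_nil_iff]
        intro e he
        have hea : e ≠ a := fun h => har (h ▸ he)
        have hed : e ≠ d := fun h => hdr (h ▸ he)
        simp [hea, hed]
      rw [this]
    · have hcr : c ∈ r := by
        rcases List.mem_cons.mp hct with h | h
        · exact absurd h.symm hdc
        · exact h
      rw [List.filter_cons_of_neg (by simp [hda, hdc]), ih hndr har hcr]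

theorem eq_of_order : ∀ (l₁ l₂ : List X), l₁.Nodup → l₂.Nodup →
    (∀ a, a ∈ l₁ ↔ a ∈ l₂) →
    (∀ a b, a ≠ b → l₁.filter (fun c => c == a || c == b) = [a, b] →
      l₂.filter (fun c => c == a || c == b) = [a, b]) →
    l₁ = l₂ := by
  intro l₁
  induction l₁ with
  | nil =>
    intro l₂ _ _ hm _
    exact (List.eq_nil_iff_forall_not_mem.mpr (fun a ha => by simpa using (hm a).mpr ha)).symm
  | cons a t ih =>
    intro l₂ hn₁ hn₂ hm ho
    have hat : a ∉ t := (List.nodup_cons.mp hn₁).1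
    have hnt : t.Nodup := (List.nodup_cons.mp hn₁).2
    have hal₂ : a ∈ l₂ := (hm a).mp (List.mem_cons_self (a := a) (l := t))
    rcases l₂ with _ | ⟨c, r⟩
    · simp at hal₂
    · have hcr : c ∉ r := (List.nodup_cons.mp hn₂).1
      have hnr : r.Nodup := (List.nodup_cons.mp hn₂).2
      have hca : c = a := by
        by_contra hne
        have hct : c ∈ t := by
          rcases List.mem_cons.mp ((hm c).mpr (List.mem_cons_self (a := c) (l := r))) with h | h
          · exact absurd h hne
          · exact h
        have hfu : (a :: t).filter (fun d => d == a || d == c) = [a, c] := by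
          rw [List.filter_cons_of_pos (by simp), filter_single a c t hnt hat hct]
        have hfv := ho a c (fun h => hne h.symm) hfu
        rw [List.filter_cons_of_pos (by simp)] at hfv
        exact hne (List.cons.injEq .. ▸ hfv).1
      subst hca
      have har : c ∉ r := hcr
      have hmt : ∀ x, x ∈ t ↔ x ∈ r := by
        intro x
        constructor
        · intro hx
          have hxa : x ≠ c := fun h => hat (h ▸ hx)
          rcases List.mem_cons.mp ((hm x).mp (List.mem_cons_of_mem _ hx)) with h | h
          · exact absurd h hxa
          · exact h
        · intro hx
          have hxa : x ≠ c := fun h => har (h ▸ hx)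
          rcases List.mem_cons.mp ((hm x).mpr (List.mem_cons_of_mem _ hx)) with h | h
          · exact absurd h hxa
          · exact h
      have hot : ∀ x y, x ≠ y → t.filter (fun c => c == x || c == y) = [x, y] →
          r.filter (fun c => c == x || c == y) = [x, y] := by
        intro x y hxy hf
        have hxt : x ∈ t := by
          have : x ∈ t.filter (fun c => c == x || c == y) := by rw [hf]; simp
          exact (List.mem_filter.mp this).1
        have hyt : y ∈ t := by
          have : y ∈ t.filter (fun c => c == x || c == y) := by rw [hf]; simp
          exact (List.mem_filter.mp this).1
        have hax : c ≠ x := fun h => hat (h ▸ hxt)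
        have hay : c ≠ y := fun h => hat (h ▸ hyt)
        have h1 : (c :: t).filter (fun c => c == x || c == y) = [x, y] := by
          rw [List.filter_cons_of_neg (by simp [hax, hay]), hf]
        have h2 := ho x y hxy h1
        rwa [List.filter_cons_of_neg (by simp [hax, hay])] at h2
      rw [ih r hnt hnr hmt hot]

section Helpers
variable {X : Type} [DecidableEq X]

theorem nodup_simple (w : List X) : (w.filter (fun a => decide (w.count a = 1))).Nodup := by
  rw [List.nodup_iff_count_le_one]
  intro a
  by_cases h : w.count a = 1
  · rw [List.count_filter (by simpa using h)]; omega
  · have : a ∉ w.filter (fun a => decide (w.count a = 1)) := by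
      intro hmem
      exact h (by simpa using (List.mem_filter.mp hmem).2)
    rw [List.count_eq_zero_of_not_mem this]
    omega

theorem mem_simple (w : List X) (a : X) :
    a ∈ w.filter (fun a => decide (w.count a = 1)) ↔ w.count a = 1 := by
  rw [List.mem_filter]
  constructor
  · intro h; simpa using h.2
  · intro h
    exact ⟨List.count_pos_iff.mp (by omega), by simpa using h⟩

theorem simple_filter_pair (w : List X) (a b : X)
    (ha : w.count a = 1) (hb : w.count b = 1) :
    (w.filter (fun c => decide (w.count c = 1))).filter (fun c => c == a || c == b)
      = w.filter (fun c => c == a || c == b) := by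
  rw [List.filter_filter]
  apply List.filter_congr
  intro c _
  by_cases h : (c == a || c == b) = true
  · have hab : c = a ∨ c = b := by simpa using h
    have hc : w.count c = 1 := by rcases hab with rfl | rfl <;> assumption
    simp [h, hc]
  · simp only [Bool.or_eq_true, beq_iff_eq, not_or] at h
    simp [h.1, h.2]

end Helpers


/-- Word problem for D₁ = var{x² ≈ x³, x²y ≈ xyx ≈ yx²}: a non-trivial identity
u ≈ v holds in all monoids of D₁ iff sim(u) = sim(v), mul(u) = mul(v), and the simple
letters occur in the same order in u and v. -/
theorem stmt13 {X : Type} [DecidableEq X] (u v : List X) (huv : u ≠ v) :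
    (∀ (M : Type) [Monoid M],
        (∀ x : M, x ^ 2 = x ^ 3) →
        (∀ x y : M, x ^ 2 * y = x * y * x) →
        (∀ x y : M, x * y * x = y * x ^ 2) →
        ∀ f : X → M, (u.map f).prod = (v.map f).prod) ↔
      ((∀ x : X, u.count x = 1 ↔ v.count x = 1) ∧
        (∀ x : X, 2 ≤ u.count x ↔ 2 ≤ v.count x) ∧
        u.filter (fun a => decide (u.count a = 1)) =
          v.filter (fun a => decide (v.count a = 1))) := by
  constructor
  · intro H
    have key3 : ∀ x : X, (u.count x = 1 ↔ v.count x = 1) ∧ (2 ≤ u.count x ↔ 2 ≤ v.count x) := by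
      intro x
      have h := H T3 (by decide) (by decide) (by decide) (fun c => if c = x then T3.s else 1)
      rw [prod_count x u, prod_count x v] at h
      exact g_inj h
    refine ⟨fun x => (key3 x).1, fun x => (key3 x).2, ?_⟩
    apply eq_of_order _ _ (nodup_simple u) (nodup_simple v)
    · intro a
      rw [mem_simple, mem_simple]
      exact (key3 a).1
    · intro a b hab hf
      have hau : u.count a = 1 := by
        have : a ∈ u.filter (fun c => decide (u.count c = 1)) :=
          (List.mem_filter.mp (by rw [hf]; exact List.mem_cons_self (a := a) (l := [b]))).1
        exact (mem_simple u a).mp this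
      have hbu : u.count b = 1 := by
        have : b ∈ u.filter (fun c => decide (u.count c = 1)) :=
          (List.mem_filter.mp (by rw [hf]; simp)).1
        exact (mem_simple u b).mp this
      have hav : v.count a = 1 := ((key3 a).1).mp hau
      have hbv : v.count b = 1 := ((key3 b).1).mp hbu
      have hu : u.filter (fun c => c == a || c == b) = [a, b] := by
        rw [← simple_filter_pair u a b hau hbu, hf]
      -- evaluate in T5
      have hq := H T5 (by decide) (by decide) (by decide)
        (fun c => if c = a then T5.a else if c = b then T5.b else 1)
      rw [prod_map_filter _ (fun c => c == a || c == b)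
          (by intro c hc
              have hc' : ¬(c = a) ∧ ¬(c = b) := by simpa using hc
              simp [hc'.1, hc'.2]) u,
        prod_map_filter _ (fun c => c == a || c == b)
          (by intro c hc
              have hc' : ¬(c = a) ∧ ¬(c = b) := by simpa using hc
              simp [hc'.1, hc'.2]) v, hu] at hq
      have hv2 : v.filter (fun c => c == a || c == b) = [a, b] ∨
          v.filter (fun c => c == a || c == b) = [b, a] := by
        apply two_elt_list a b hab
        · rw [List.count_filter (by simp)]; exact hav
        · rw [List.count_filter (by simp)]; exact hbv
        · intro c hc
          simpa using (List.mem_filter.mp hc).2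
      rcases hv2 with hv2 | hv2
      · rw [simple_filter_pair v a b hav hbv]
        exact hv2
      · rw [hv2] at hq
        simp only [List.map_cons, List.map_nil, List.prod_cons, List.prod_nil,
          if_pos rfl, if_neg hab, if_neg (Ne.symm hab)] at hq
        exact absurd hq (by decide)
  · rintro ⟨hsim, hmul, hord⟩ M _ h1 h2 h3 f
    rw [normal_form h1 h2 h3 f u.length u le_rfl, normal_form h1 h2 h3 f v.length v le_rfl, hord]
    congr 1
    apply prod_sq_eq h2 h3 f (List.Nodup.filter _ u.nodup_dedup) (List.Nodup.filter _ v.nodup_dedup)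
    intro a
    rw [List.mem_filter, List.mem_filter, List.mem_dedup, List.mem_dedup]
    constructor
    · rintro ⟨_, h⟩
      have h2a : 2 ≤ u.count a := by simpa using h
      have h2b : 2 ≤ v.count a := (hmul a).mp h2a
      exact ⟨List.count_pos_iff.mp (by omega), by simpa using h2b⟩
    · rintro ⟨_, h⟩
      have h2b : 2 ≤ v.count a := by simpa using h
      have h2a : 2 ≤ u.count a := (hmul a).mpr h2b
      exact ⟨List.count_pos_iff.mp (by omega), by simpa using h2a⟩
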